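/- Let A and B be strict bicategories, and let F : B → A and U : A → B be strict 2-functors equipped with 2-natural transformations η (with components η_b : b ⟶ U.obj (F.obj b)) and ε (with components ε_a : F.obj (U.obj a) ⟶ a) satisfying the triangle identities F.map η_b ≫ ε_{F.obj b} = 𝟙 (F.obj b) and η_{U.obj a} ≫ U.map ε_a = 𝟙 (U.obj a), so that F ⊣ U is a 2-adjunction. If (r, ρ) is an absolute right lifting of a 1-cell g : c ⟶ a' through a 1-cell f : b' ⟶ a' in A, then (U.map r, U.map₂ ρ) is an absolute right lifting of U.map g through U.map f in B, where U.map₂ ρ is regarded as a 2-cell U.map r ≫ U.map f ⟶ U.map g via the strictness equality U.map (r ≫ f) = U.map r ≫ U.map f. That is, right 2-adjoint strict 2-functors preserve absolute right lifting diagrams. -/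

import Mathlib

open CategoryTheory Bicategory

universe w₁ w₂ w₃ v₁ v₂ v₃ u₁ u₂ u₃

/-- A strict 2-functor between strict bicategories is a pseudofunctor which preserves
identity 1-cells and composition of 1-cells strictly, and whose coherence isomorphisms
are the `eqToIso`s of these equalities. -/
structure StrictTwoFunctor (B : Type u₁) (A : Type u₂) [Bicategory.{w₁, v₁} B]
    [Bicategory.{w₂, v₂} A] [Bicategory.Strict B] [Bicategory.Strict A] extends
    CategoryTheory.Pseudofunctor B A where
  map_id' : ∀ x : B, toPseudofunctor.map (𝟙 x) = 𝟙 (toPseudofunctor.obj x)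
  map_comp' : ∀ {x y z : B} (f : x ⟶ y) (g : y ⟶ z),
    toPseudofunctor.map (f ≫ g) = toPseudofunctor.map f ≫ toPseudofunctor.map g
  mapId_eq : ∀ x : B, toPseudofunctor.mapId x = eqToIso (map_id' x)
  mapComp_eq : ∀ {x y z : B} (f : x ⟶ y) (g : y ⟶ z),
    toPseudofunctor.mapComp f g = eqToIso (map_comp' f g)

namespace StrictTwoFunctor

variable {B : Type u₁} {A : Type u₂} {C : Type u₃} [Bicategory.{w₁, v₁} B]
  [Bicategory.{w₂, v₂} A] [Bicategory.{w₃, v₃} C]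
  [Bicategory.Strict B] [Bicategory.Strict A] [Bicategory.Strict C]

theorem map₂_eqToHom (F : StrictTwoFunctor B A) {x y : B} {f g : x ⟶ y} (h : f = g) :
    F.map₂ (eqToHom h) = eqToHom (congrArg F.map h) := by
  subst h; simp

/-- The identity strict 2-functor. -/
def id (B : Type u₁) [Bicategory.{w₁, v₁} B] [Bicategory.Strict B] :
    StrictTwoFunctor B B where
  toPseudofunctor := Pseudofunctor.id B
  map_id' _ := rfl
  map_comp' _ _ := rfl
  mapId_eq _ := by aesop_cat
  mapComp_eq _ _ := by aesop_cat

/-- Composition of strict 2-functors. -/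
def comp (F : StrictTwoFunctor B A) (G : StrictTwoFunctor A C) : StrictTwoFunctor B C where
  toPseudofunctor := F.toPseudofunctor.comp G.toPseudofunctor
  map_id' x := by
    simp [Pseudofunctor.comp, PrelaxFunctor.comp, PrelaxFunctorStruct.comp, F.map_id', G.map_id'] <;> rfl
  map_comp' f g := by
    simp [Pseudofunctor.comp, PrelaxFunctor.comp, PrelaxFunctorStruct.comp, F.map_comp', G.map_comp'] <;> rfl
  mapId_eq x := by
    ext
    change G.map₂ (F.mapId x).hom ≫ (G.mapId (F.obj x)).hom = _
    simp [Pseudofunctor.comp, F.mapId_eq, G.mapId_eq, G.map₂_eqToHom]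
    rfl
  mapComp_eq f g := by
    ext
    change G.map₂ (F.mapComp f g).hom ≫ (G.mapComp (F.map f) (F.map g)).hom = _
    simp [Pseudofunctor.comp, F.mapComp_eq, G.mapComp_eq, G.map₂_eqToHom]
    rfl

end StrictTwoFunctor

/-- A 2-natural transformation between strict 2-functors. -/
structure TwoNatTrans {B : Type u₁} {A : Type u₂} [Bicategory.{w₁, v₁} B]
    [Bicategory.{w₂, v₂} A] [Bicategory.Strict B] [Bicategory.Strict A]
    (F G : StrictTwoFunctor B A) where
  app : ∀ x : B, F.obj x ⟶ G.obj x
  naturality : ∀ {x y : B} (f : x ⟶ y), F.map f ≫ app y = app x ≫ G.map f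
  naturality₂ : ∀ {x y : B} {f g : x ⟶ y} (θ : f ⟶ g),
    (F.map₂ θ ▷ app y) ≫ eqToHom (naturality g) = eqToHom (naturality f) ≫ (app x ◁ G.map₂ θ)

/-- In a strict bicategory `K`, the pair `(r, ρ)` is an absolute right lifting of `g` through
`f` if every 2-cell `χ : b' ≫ f ⟶ c' ≫ g` factors uniquely through `ρ`. -/
def IsAbsoluteRightLifting {K : Type u₁} [Bicategory.{w₁, v₁} K] [Bicategory.Strict K]
    {a b c : K} (f : b ⟶ a) (g : c ⟶ a) (r : c ⟶ b) (ρ : r ≫ f ⟶ g) : Prop :=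
  ∀ (x : K) (b' : x ⟶ b) (c' : x ⟶ c) (χ : b' ≫ f ⟶ c' ≫ g),
    ∃! ζ : b' ⟶ c' ≫ r,
      χ = (ζ ▷ f) ≫ eqToHom (Bicategory.Strict.assoc c' r f) ≫ (c' ◁ ρ)

variable {B : Type u₁} {A : Type u₂} [Bicategory.{w₁, v₁} B] [Bicategory.{w₂, v₂} A]
  [Bicategory.Strict B] [Bicategory.Strict A]

def etaA (F : StrictTwoFunctor B A) (U : StrictTwoFunctor A B)
    (η : TwoNatTrans (StrictTwoFunctor.id B) (F.comp U)) (x : B) : x ⟶ U.obj (F.obj x) :=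
  η.app x

def epsA (F : StrictTwoFunctor B A) (U : StrictTwoFunctor A B)
    (ε' : TwoNatTrans (U.comp F) (StrictTwoFunctor.id A)) (a : A) : F.obj (U.obj a) ⟶ a :=
  ε'.app a

section AuxK
variable {K : Type u₃} [Bicategory.{w₃, v₃} K] [Bicategory.Strict K]

theorem wR_congr {a b c : K} {f g : a ⟶ b} {k k' : b ⟶ c} (h : k = k') (θ : f ⟶ g) :
    θ ▷ k = eqToHom (by rw [h]) ≫ (θ ▷ k') ≫ eqToHom (by rw [h]) := by
  subst h; simp

theorem wL_congr {a b c : K} {k k' : a ⟶ b} {f g : b ⟶ c} (h : k = k') (θ : f ⟶ g) :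
    k ◁ θ = eqToHom (by rw [h]) ≫ (k' ◁ θ) ≫ eqToHom (by rw [h]) := by
  subst h; simp

theorem wR_wR {a b c d : K} {f g : a ⟶ b} (θ : f ⟶ g) (k : b ⟶ c) (l : c ⟶ d) :
    (θ ▷ k) ▷ l = eqToHom (Bicategory.Strict.assoc f k l) ≫ (θ ▷ (k ≫ l)) ≫
      eqToHom (Bicategory.Strict.assoc g k l).symm := by
  rw [Bicategory.whiskerRight_comp]
  simp [Bicategory.Strict.associator_eqToIso]

theorem wL_wL {a b c d : K} (k : a ⟶ b) (l : b ⟶ c) {f g : c ⟶ d} (θ : f ⟶ g) :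
    k ◁ (l ◁ θ) = eqToHom (Bicategory.Strict.assoc k l f).symm ≫ ((k ≫ l) ◁ θ) ≫
      eqToHom (Bicategory.Strict.assoc k l g) := by
  rw [Bicategory.comp_whiskerLeft]
  simp [Bicategory.Strict.associator_eqToIso]

theorem wL_wR {a b c d : K} (k : a ⟶ b) {f g : b ⟶ c} (θ : f ⟶ g) (l : c ⟶ d) :
    k ◁ (θ ▷ l) = eqToHom (Bicategory.Strict.assoc k f l).symm ≫ ((k ◁ θ) ▷ l) ≫
      eqToHom (Bicategory.Strict.assoc k g l) := by
  rw [Bicategory.whisker_assoc]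
  simp [Bicategory.Strict.associator_eqToIso]

theorem wR_id {a b : K} {f g : a ⟶ b} (θ : f ⟶ g) :
    θ ▷ 𝟙 b = eqToHom (Bicategory.Strict.comp_id f) ≫ θ ≫
      eqToHom (Bicategory.Strict.comp_id g).symm := by
  rw [Bicategory.whiskerRight_id]
  simp [Bicategory.Strict.rightUnitor_eqToIso]

theorem id_wL {a b : K} {f g : a ⟶ b} (θ : f ⟶ g) :
    𝟙 a ◁ θ = eqToHom (Bicategory.Strict.id_comp f) ≫ θ ≫
      eqToHom (Bicategory.Strict.id_comp g).symm := by
  rw [Bicategory.id_whiskerLeft]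
  simp [Bicategory.Strict.leftUnitor_eqToIso]

end AuxK
section AuxK2
variable {K : Type u₃} [Bicategory.{w₃, v₃} K] [Bicategory.Strict K]
theorem wL_wR' {a b c d : K} (k : a ⟶ b) {f g : b ⟶ c} (θ : f ⟶ g) (l : c ⟶ d) :
    (k ◁ θ) ▷ l = eqToHom (Bicategory.Strict.assoc k f l) ≫ (k ◁ (θ ▷ l)) ≫
      eqToHom (Bicategory.Strict.assoc k g l).symm := by
  rw [wL_wR]; simp
end AuxK2
section AuxK3
variable {K : Type u₃} [Bicategory.{w₃, v₃} K] [Bicategory.Strict K]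
theorem wR_eq_id {a b : K} {f g : a ⟶ b} {k : b ⟶ b} (h : k = 𝟙 b) (θ : f ⟶ g) :
    θ ▷ k = eqToHom (by rw [h, Category.comp_id]) ≫ θ ≫
      eqToHom (by rw [h, Category.comp_id]) := by
  subst h
  rw [Bicategory.whiskerRight_id]
  simp [Bicategory.Strict.rightUnitor_eqToIso]

theorem wL_eq_id {a b : K} {f g : a ⟶ b} {k : a ⟶ a} (h : k = 𝟙 a) (θ : f ⟶ g) :
    k ◁ θ = eqToHom (by rw [h, Category.id_comp]) ≫ θ ≫
      eqToHom (by rw [h, Category.id_comp]) := by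
  subst h
  rw [Bicategory.id_whiskerLeft]
  simp [Bicategory.Strict.leftUnitor_eqToIso]
end AuxK3
section AuxK4
variable {K : Type u₃} [Bicategory.{w₃, v₃} K] [Bicategory.Strict K]
theorem wR_wR' {a b c d : K} {f g : a ⟶ b} (θ : f ⟶ g) (k : b ⟶ c) (l : c ⟶ d) :
    θ ▷ (k ≫ l) = eqToHom (Bicategory.Strict.assoc f k l).symm ≫ ((θ ▷ k) ▷ l) ≫
      eqToHom (Bicategory.Strict.assoc g k l) := by
  rw [wR_wR]; simp
end AuxK4

section Aux
variable (F : StrictTwoFunctor B A) (U : StrictTwoFunctor A B)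
  (η : TwoNatTrans (StrictTwoFunctor.id B) (F.comp U))
  (ε' : TwoNatTrans (U.comp F) (StrictTwoFunctor.id A))

theorem etaNat {x y : B} (s : x ⟶ y) : s ≫ etaA F U η y = etaA F U η x ≫ U.map (F.map s) :=
  η.naturality s

theorem epsNat {a₁ a₂ : A} (k : a₁ ⟶ a₂) : F.map (U.map k) ≫ epsA F U ε' a₂ = epsA F U ε' a₁ ≫ k :=
  ε'.naturality k

theorem etaNat₂ {x y : B} {s t : x ⟶ y} (θ : s ⟶ t) :
    (θ ▷ etaA F U η y) ≫ eqToHom (etaNat F U η t) =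
      eqToHom (etaNat F U η s) ≫ (etaA F U η x ◁ U.map₂ (F.map₂ θ)) :=
  η.naturality₂ θ

theorem epsNat₂ {a₁ a₂ : A} {k l : a₁ ⟶ a₂} (θ : k ⟶ l) :
    (F.map₂ (U.map₂ θ) ▷ epsA F U ε' a₂) ≫ eqToHom (epsNat F U ε' l) =
      eqToHom (epsNat F U ε' k) ≫ (epsA F U ε' a₁ ◁ θ) :=
  ε'.naturality₂ θ

theorem transpose_id
    (triangle_U : ∀ a : A, etaA F U η (U.obj a) ≫ U.map (epsA F U ε' a) = 𝟙 (U.obj a))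
    {x : B} {a : A} (s : x ⟶ U.obj a) :
    etaA F U η x ≫ U.map (F.map s ≫ epsA F U ε' a) = s := by
  rw [U.map_comp', ← Category.assoc, ← etaNat F U η s, Category.assoc, triangle_U,
    Category.comp_id]

end Aux

section Aux2
variable (F : StrictTwoFunctor B A) (U : StrictTwoFunctor A B)
  (η : TwoNatTrans (StrictTwoFunctor.id B) (F.comp U))
  (ε' : TwoNatTrans (U.comp F) (StrictTwoFunctor.id A))

theorem etaNat₂' {x y : B} {s t : x ⟶ y} (θ : s ⟶ t) :
    etaA F U η x ◁ U.map₂ (F.map₂ θ) =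
      eqToHom (etaNat F U η s).symm ≫ (θ ▷ etaA F U η y) ≫ eqToHom (etaNat F U η t) := by
  have h := etaNat₂ F U η θ
  rw [← cancel_epi (eqToHom (etaNat F U η s)), ← h]
  simp

theorem epsNat₂' {a₁ a₂ : A} {k l : a₁ ⟶ a₂} (θ : k ⟶ l) :
    F.map₂ (U.map₂ θ) ▷ epsA F U ε' a₂ =
      eqToHom (epsNat F U ε' k) ≫ (epsA F U ε' a₁ ◁ θ) ≫ eqToHom (epsNat F U ε' l).symm := by
  have h := epsNat₂ F U ε' θ
  rw [← cancel_mono (eqToHom (epsNat F U ε' l)), h]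
  simp

variable (triangle_U : ∀ a : A, etaA F U η (U.obj a) ≫ U.map (epsA F U ε' a) = 𝟙 (U.obj a))

theorem down_up {x : B} {a : A} {s t : x ⟶ U.obj a} (θ : s ⟶ t) :
    eqToHom (transpose_id F U η ε' triangle_U s).symm ≫
      (etaA F U η x ◁ U.map₂ (F.map₂ θ ▷ epsA F U ε' a)) ≫
      eqToHom (transpose_id F U η ε' triangle_U t) = θ := by
  have hw : U.map₂ (F.map₂ θ ▷ epsA F U ε' a) =
      eqToHom (U.map_comp' _ _) ≫ (U.map₂ (F.map₂ θ) ▷ U.map (epsA F U ε' a)) ≫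
        eqToHom (U.map_comp' _ _).symm := by
    rw [U.toPseudofunctor.map₂_whisker_right, U.mapComp_eq, U.mapComp_eq]; simp
  rw [hw, Bicategory.whiskerLeft_comp, Bicategory.whiskerLeft_comp, wL_wR,
    etaNat₂' F U η θ, Bicategory.comp_whiskerRight, Bicategory.comp_whiskerRight, wR_wR,
    wR_eq_id (triangle_U a) θ]
  simp

theorem up_down (triangle_F : ∀ b : B, F.map (etaA F U η b) ≫ epsA F U ε' (F.obj b) = 𝟙 (F.obj b)) {x : B} {a : A} {s t : x ⟶ U.obj a}
    (φ : F.map s ≫ epsA F U ε' a ⟶ F.map t ≫ epsA F U ε' a) :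
    F.map₂ (eqToHom (transpose_id F U η ε' triangle_U s).symm ≫
      (etaA F U η x ◁ U.map₂ φ) ≫ eqToHom (transpose_id F U η ε' triangle_U t)) ▷ epsA F U ε' a = φ := by
  have hw : F.map₂ (etaA F U η x ◁ U.map₂ φ) =
      eqToHom (F.map_comp' _ _) ≫ (F.map (etaA F U η x) ◁ F.map₂ (U.map₂ φ)) ≫
        eqToHom (F.map_comp' _ _).symm := by
    rw [F.toPseudofunctor.map₂_whisker_left, F.mapComp_eq, F.mapComp_eq]; simp
  rw [F.toPrelaxFunctor.map₂_comp, F.toPrelaxFunctor.map₂_comp, F.map₂_eqToHom,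
    F.map₂_eqToHom, hw]
  rw [Bicategory.comp_whiskerRight, Bicategory.comp_whiskerRight,
    Bicategory.comp_whiskerRight, Bicategory.comp_whiskerRight,
    wL_wR' (F.map (etaA F U η x)) (F.map₂ (U.map₂ φ)) (epsA F U ε' a),
    show F.map₂ (U.map₂ φ) ▷ epsA F U ε' a = _ from epsNat₂' F U ε' φ, Bicategory.whiskerLeft_comp, Bicategory.whiskerLeft_comp, wL_wL,
    wL_eq_id (triangle_F x) φ]
  simp

end Aux2

/-- Right 2-adjoint strict 2-functors preserve absolute right lifting diagrams: if `F ⊣ U`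
is a 2-adjunction (given by 2-natural transformations `η`, `ε'` satisfying the triangle
identities) and `(r, ρ)` is an absolute right lifting of `g` through `f` in `A`, then
`(U.map r, U.map₂ ρ)` is an absolute right lifting of `U.map g` through `U.map f` in `B`. -/
theorem rightTwoAdjoint_preserves_absoluteRightLifting
    (F : StrictTwoFunctor B A) (U : StrictTwoFunctor A B)
    (η : TwoNatTrans (StrictTwoFunctor.id B) (F.comp U))
    (ε' : TwoNatTrans (U.comp F) (StrictTwoFunctor.id A))
    (triangle_F : ∀ b : B, F.map (η.app b) ≫ ε'.app (F.obj b) = 𝟙 (F.obj b))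
    (triangle_U : ∀ a : A, η.app (U.obj a) ≫ U.map (ε'.app a) = 𝟙 (U.obj a))
    {a' b' c : A} (f : b' ⟶ a') (g : c ⟶ a') (r : c ⟶ b') (ρ : r ≫ f ⟶ g)
    (h : IsAbsoluteRightLifting f g r ρ) :
    IsAbsoluteRightLifting (U.map f) (U.map g) (U.map r)
      (eqToHom (U.map_comp' r f).symm ≫ U.map₂ ρ) := by
  replace triangle_F : ∀ b : B, F.map (etaA F U η b) ≫ epsA F U ε' (F.obj b) = 𝟙 (F.obj b) :=
    triangle_F
  replace triangle_U : ∀ a : A, etaA F U η (U.obj a) ≫ U.map (epsA F U ε' a) = 𝟙 (U.obj a) :=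
    triangle_U
  intro x p q χ
  have hp : F.map (p ≫ U.map f) ≫ epsA F U ε' a' = (F.map p ≫ epsA F U ε' b') ≫ f := by
    rw [F.map_comp', Category.assoc, epsNat F U ε' f, ← Category.assoc]
  have hq : F.map (q ≫ U.map g) ≫ epsA F U ε' a' = (F.map q ≫ epsA F U ε' c) ≫ g := by
    rw [F.map_comp', Category.assoc, epsNat F U ε' g, ← Category.assoc]
  have hqr : F.map (q ≫ U.map r) ≫ epsA F U ε' b' = (F.map q ≫ epsA F U ε' c) ≫ r := by
    rw [F.map_comp', Category.assoc, epsNat F U ε' r, ← Category.assoc]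
  -- the transposed 2-cell in A
  set χA : (F.map p ≫ epsA F U ε' b') ≫ f ⟶ (F.map q ≫ epsA F U ε' c) ≫ g :=
    eqToHom hp.symm ≫ (F.map₂ χ ▷ epsA F U ε' a') ≫ eqToHom hq with hχA
  obtain ⟨ζA, hζA, huniq⟩ := h (F.obj x) (F.map p ≫ epsA F U ε' b') (F.map q ≫ epsA F U ε' c) χA
  -- transposition maps
  set Φ : (p ⟶ q ≫ U.map r) → (F.map p ≫ epsA F U ε' b' ⟶ (F.map q ≫ epsA F U ε' c) ≫ r) :=
    fun ζ' => (F.map₂ ζ' ▷ epsA F U ε' b') ≫ eqToHom hqr with hΦ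
  set Ψ : (F.map p ≫ epsA F U ε' b' ⟶ (F.map q ≫ epsA F U ε' c) ≫ r) → (p ⟶ q ≫ U.map r) :=
    fun θA => eqToHom (transpose_id F U η ε' triangle_U p).symm ≫
      (etaA F U η x ◁ U.map₂ (θA ≫ eqToHom hqr.symm)) ≫
      eqToHom (transpose_id F U η ε' triangle_U (q ≫ U.map r)) with hΨ
  have hΦΨ : ∀ θA, Φ (Ψ θA) = θA := by
    intro θA
    rw [hΦ, hΨ]
    dsimp only
    rw [up_down F U η ε' triangle_U triangle_F (θA ≫ eqToHom hqr.symm)]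
    simp
  have hΨΦ : ∀ ζ', Ψ (Φ ζ') = ζ' := by
    intro ζ'
    rw [hΦ, hΨ]
    dsimp only
    rw [show ((F.map₂ ζ' ▷ epsA F U ε' b') ≫ eqToHom hqr) ≫ eqToHom hqr.symm =
      F.map₂ ζ' ▷ epsA F U ε' b' from by simp]
    exact down_up F U η ε' triangle_U ζ'
  -- the main computation
  have hM : ∀ ζ' : p ⟶ q ≫ U.map r,
      F.map₂ ((ζ' ▷ U.map f) ≫ eqToHom (Bicategory.Strict.assoc q (U.map r) (U.map f)) ≫
        (q ◁ (eqToHom (U.map_comp' r f).symm ≫ U.map₂ ρ))) ▷ epsA F U ε' a' =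
      eqToHom hp ≫ ((Φ ζ' ▷ f) ≫ eqToHom (Bicategory.Strict.assoc _ r f) ≫
        ((F.map q ≫ epsA F U ε' c) ◁ ρ)) ≫ eqToHom hq.symm := by
    intro ζ'
    rw [hΦ]
    dsimp only
    have hw1 : F.map₂ (ζ' ▷ U.map f) = eqToHom (F.map_comp' p (U.map f)) ≫
        (F.map₂ ζ' ▷ F.map (U.map f)) ≫ eqToHom (F.map_comp' (q ≫ U.map r) (U.map f)).symm := by
      rw [F.toPseudofunctor.map₂_whisker_right, F.mapComp_eq, F.mapComp_eq]; simp
    have hw2 : F.map₂ (q ◁ (eqToHom (U.map_comp' r f).symm ≫ U.map₂ ρ)) =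
        eqToHom (F.map_comp' q (U.map r ≫ U.map f)) ≫
        (F.map q ◁ F.map₂ (eqToHom (U.map_comp' r f).symm ≫ U.map₂ ρ)) ≫
        eqToHom (F.map_comp' q (U.map g)).symm := by
      rw [F.toPseudofunctor.map₂_whisker_left, F.mapComp_eq, F.mapComp_eq]; simp
    simp only [PrelaxFunctor.map₂_comp, StrictTwoFunctor.map₂_eqToHom, Category.assoc]
    rw [hw1, hw2]
    simp only [PrelaxFunctor.map₂_comp, StrictTwoFunctor.map₂_eqToHom,
      Category.assoc, Bicategory.whiskerLeft_comp, Bicategory.whiskerLeft_eqToHom,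
      Bicategory.comp_whiskerRight, Bicategory.eqToHom_whiskerRight,
      eqToHom_trans, eqToHom_trans_assoc]
    rw [wR_wR (F.map₂ ζ') (F.map (U.map f)) (epsA F U ε' a'),
      wR_congr (epsNat F U ε' f) (F.map₂ ζ'),
      wR_wR' (F.map₂ ζ') (epsA F U ε' b') f,
      wL_wR' (F.map q) (F.map₂ (U.map₂ ρ)) (epsA F U ε' a'),
      epsNat₂' F U ε' ρ,
      Bicategory.whiskerLeft_comp, Bicategory.whiskerLeft_comp,
      wL_wL (F.map q) (epsA F U ε' c) ρ]
    simp
  -- conclude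
  refine ⟨Ψ ζA, ?_, ?_⟩
  · have he : F.map₂ χ ▷ epsA F U ε' a' =
        F.map₂ ((Ψ ζA ▷ U.map f) ≫ eqToHom (Bicategory.Strict.assoc q (U.map r) (U.map f)) ≫
          (q ◁ (eqToHom (U.map_comp' r f).symm ≫ U.map₂ ρ))) ▷ epsA F U ε' a' := by
      rw [hM (Ψ ζA), hΦΨ ζA, ← hζA, hχA]
      simp
    have := congrArg (fun ψ => eqToHom (transpose_id F U η ε' triangle_U (p ≫ U.map f)).symm ≫
      (etaA F U η x ◁ U.map₂ ψ) ≫ eqToHom (transpose_id F U η ε' triangle_U (q ≫ U.map g))) he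
    rwa [down_up F U η ε' triangle_U χ, down_up F U η ε' triangle_U] at this
  · intro y hy
    have h1 : χA = (Φ y ▷ f) ≫ eqToHom (Bicategory.Strict.assoc _ r f) ≫
        ((F.map q ≫ epsA F U ε' c) ◁ ρ) := by
      have := congrArg (fun ψ => F.map₂ ψ ▷ epsA F U ε' a') hy
      rw [hM y] at this
      rw [hχA]
      calc eqToHom hp.symm ≫ (F.map₂ χ ▷ epsA F U ε' a') ≫ eqToHom hq
          = eqToHom hp.symm ≫ (eqToHom hp ≫ ((Φ y ▷ f) ≫
              eqToHom (Bicategory.Strict.assoc _ r f) ≫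
              ((F.map q ≫ epsA F U ε' c) ◁ ρ)) ≫ eqToHom hq.symm) ≫ eqToHom hq := by rw [← this]
        _ = _ := by simp
    have h2 : Φ y = ζA := huniq (Φ y) h1
    rw [← hΨΦ y, h2]
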